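/- Let G = (L, B) be a finite graph, let β ≥ 0, let q ≥ 2 be an integer, let i ∈ {1,…,q}, and let x, y ∈ L. If X is distributed according to the Potts Gibbs measure μ^G_{β,q}, then μ^G_{β,q}(X(x)=i) = 1/q, and the events {X(x)=i} and {X(y)=i} are positively correlated: μ^G_{β,q}(X(x)=i and X(y)=i) ≥ μ^G_{β,q}(X(x)=i)·μ^G_{β,q}(X(y)=i) = 1/q². -/

import Mathlib

open Finset

noncomputable section

variable {V : Type*}

/-- The spanning subgraph of `G` consisting of the `η`-open edges. -/
def openSub (G : SimpleGraph V) (η : G.edgeSet → Bool) : SimpleGraph V :=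
  SimpleGraph.fromEdgeSet {s : Sym2 V | ∃ h : s ∈ G.edgeSet, η ⟨s, h⟩ = true}

/-- The number of open clusters of `η` (connected components of the spanning
subgraph of open edges, including isolated vertices). -/
def numClusters (G : SimpleGraph V) (η : G.edgeSet → Bool) : ℕ :=
  Nat.card (openSub G η).ConnectedComponent

/-- The factor `p^b (1-p)^(1-b)`. -/
def bWeight (p : ℝ) (b : Bool) : ℝ := if b then p else 1 - p

variable [Fintype V] [DecidableEq V]

/-- Unnormalized random-cluster weight. -/
def rcWeight (G : SimpleGraph V) [Fintype G.edgeSet] (p q : ℝ) (η : G.edgeSet → Bool) : ℝ :=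
  (∏ e : G.edgeSet, bWeight p (η e)) * q ^ numClusters G η

/-- The random-cluster measure `φ^G_{p,q}`. -/
def rcMeasure (G : SimpleGraph V) [Fintype G.edgeSet] (p q : ℝ) (η : G.edgeSet → Bool) : ℝ :=
  rcWeight G p q η / ∑ η' : G.edgeSet → Bool, rcWeight G p q η'

/-- Whether the spin configuration `σ` disagrees across an unordered pair. -/
def disagreeB {k : ℕ} (σ : V → Fin k) : Sym2 V → Bool :=
  Sym2.lift ⟨fun x y => decide (σ x ≠ σ y), fun x y => by simp [ne_comm]⟩

/-- Unnormalized Potts weight `exp(-2β · #{disagreeing edges})`. -/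
def pottsWeight (G : SimpleGraph V) [Fintype G.edgeSet] (β : ℝ) {k : ℕ} (σ : V → Fin k) : ℝ :=
  Real.exp (-2 * β * ∑ e : G.edgeSet, (if disagreeB σ e.val then (1 : ℝ) else 0))

/-- The `k`-state Potts Gibbs measure `μ^G_{β,k}`. -/
def pottsMeasure (G : SimpleGraph V) [Fintype G.edgeSet] (β : ℝ) {k : ℕ} (σ : V → Fin k) : ℝ :=
  pottsWeight G β σ / ∑ σ' : V → Fin k, pottsWeight G β σ'

/-- Unnormalized Edwards–Sokal weight. -/
def esWeight (G : SimpleGraph V) [Fintype G.edgeSet] (p : ℝ) {k : ℕ}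
    (σ : V → Fin k) (η : G.edgeSet → Bool) : ℝ :=
  ∏ e : G.edgeSet,
    bWeight p (η e) * (if η e = true ∧ disagreeB σ e.val = true then 0 else 1)

/-- The Edwards–Sokal measure `P^G_{p,k}`. -/
def esMeasure (G : SimpleGraph V) [Fintype G.edgeSet] (p : ℝ) {k : ℕ}
    (σ : V → Fin k) (η : G.edgeSet → Bool) : ℝ :=
  esWeight G p σ η /
    ∑ ση : (V → Fin k) × (G.edgeSet → Bool), esWeight G p ση.1 ση.2

/-- `σ` is constant on every open cluster of `η`. -/
def ConstOnClusters (G : SimpleGraph V) (η : G.edgeSet → Bool) {k : ℕ} (σ : V → Fin k) : Prop :=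
  ∀ x y : V, (openSub G η).Reachable x y → σ x = σ y

section Auxiliary

set_option linter.unusedSectionVars false

lemma disagreeB_false_iff {k : ℕ} (σ : V → Fin k) (u v : V) :
    disagreeB σ s(u, v) = false ↔ σ u = σ v := by
  simp [disagreeB]

lemma reach_const {H : SimpleGraph V} {k : ℕ} {σ : V → Fin k}
    (h : ∀ u v, H.Adj u v → σ u = σ v) : ∀ {u v : V}, H.Reachable u v → σ u = σ v := by
  intro u v hr
  obtain ⟨w⟩ := hr
  induction w with
  | nil => rfl
  | cons ha _ ih => exact (h _ _ ha).trans ih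

lemma disagreeB_comp {k : ℕ} (π : Fin k ≃ Fin k) (σ : V → Fin k) (s : Sym2 V) :
    disagreeB (π ∘ σ) s = disagreeB σ s := by
  induction s using Sym2.ind with
  | _ u v => simp [disagreeB, EmbeddingLike.apply_eq_iff_eq]

/-- The graph spanned by a finite set of edges of `G`. -/
def tGraph (G : SimpleGraph V) [Fintype G.edgeSet] (t : Finset G.edgeSet) : SimpleGraph V :=
  SimpleGraph.fromEdgeSet {s | ∃ e ∈ t, (e : Sym2 V) = s}

lemma tGraph_adj_eq (G : SimpleGraph V) [Fintype G.edgeSet] {t : Finset G.edgeSet}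
    {k : ℕ} {σ : V → Fin k}
    (hσ : ∀ e ∈ t, disagreeB σ (e : Sym2 V) = false) {u v : V}
    (h : (tGraph G t).Adj u v) : σ u = σ v := by
  rw [tGraph, SimpleGraph.fromEdgeSet_adj] at h
  obtain ⟨⟨e, het, heq⟩, -⟩ := h
  have := hσ e het
  rw [heq] at this
  exact (disagreeB_false_iff σ u v).1 this

/-- Every element of `Sym2` is of the form `s(u,v)`. -/
lemma exists_sym2 (s : Sym2 V) : ∃ u v : V, s = s(u, v) :=
  Sym2.ind (fun u v => ⟨u, v, rfl⟩) s

/-- Injection: among colorings constant on the clusters of a set `t` of edges,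
pinning `σ x = i, σ y = j` gives at most as many colorings as `σ x = i, σ y = i`. -/
lemma card_pair_le (G : SimpleGraph V) [Fintype G.edgeSet] {q : ℕ} (i j : Fin q)
    (x y : V) (t : Finset G.edgeSet) :
    (univ.filter (fun σ : V → Fin q => (σ x = i ∧ σ y = j) ∧
        ∀ e ∈ t, disagreeB σ (e : Sym2 V) = false)).card ≤
    (univ.filter (fun σ : V → Fin q => (σ x = i ∧ σ y = i) ∧
        ∀ e ∈ t, disagreeB σ (e : Sym2 V) = false)).card := by
  classical
  set H := tGraph G t with hH
  -- an edge of `t` cannot join the cluster of `y` to its complement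
  have hreach : ∀ e ∈ t, ∀ u v : V, (e : Sym2 V) = s(u, v) →
      (H.Reachable y u ↔ H.Reachable y v) := by
    intro e het u v huv
    have hne : u ≠ v := by
      have hadj : G.Adj u v := by
        have := e.2
        rw [huv, SimpleGraph.mem_edgeSet] at this
        exact this
      exact hadj.ne
    have hadjH : H.Adj u v := by
      rw [hH, tGraph, SimpleGraph.fromEdgeSet_adj]
      exact ⟨⟨e, het, huv⟩, hne⟩
    exact ⟨fun h => h.trans hadjH.reachable, fun h => h.trans hadjH.symm.reachable⟩
  refine Finset.card_le_card_of_injOn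
    (fun σ v => if H.Reachable y v then i else σ v) ?_ ?_
  · intro σ hσ
    simp only [mem_coe, mem_filter, mem_univ, true_and] at hσ ⊢
    obtain ⟨⟨hx, hy⟩, hag⟩ := hσ
    refine ⟨⟨?_, ?_⟩, ?_⟩
    · by_cases h : H.Reachable y x <;> simp [h, hx]
    · rw [if_pos (SimpleGraph.Reachable.refl y)]
    · intro e het
      obtain ⟨u, v, huv⟩ := exists_sym2 (e : Sym2 V)
      rw [huv, disagreeB_false_iff]
      by_cases h : H.Reachable y u
      · have h' : H.Reachable y v := (hreach e het u v huv).1 h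
        simp [h, h']
      · have h' : ¬ H.Reachable y v := fun hh => h ((hreach e het u v huv).2 hh)
        have := hag e het
        rw [huv, disagreeB_false_iff] at this
        simp [h, h', this]
  · intro σ hσ σ' hσ' heq
    simp only [coe_filter, Set.mem_setOf_eq, mem_univ, true_and] at hσ hσ'
    obtain ⟨⟨hx, hy⟩, hag⟩ := hσ
    obtain ⟨⟨hx', hy'⟩, hag'⟩ := hσ'
    have hc : ∀ u v, H.Adj u v → σ u = σ v := fun u v h => tGraph_adj_eq G hag h
    have hc' : ∀ u v, H.Adj u v → σ' u = σ' v := fun u v h => tGraph_adj_eq G hag' h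
    funext v
    by_cases h : H.Reachable y v
    · rw [← reach_const hc h, ← reach_const hc' h, hy, hy']
    · have := congrFun heq v
      simpa [h] using this

lemma pottsWeight_eq_prod (G : SimpleGraph V) [Fintype G.edgeSet] (β : ℝ) {k : ℕ}
    (σ : V → Fin k) :
    pottsWeight G β σ =
      ∏ e : G.edgeSet, (if disagreeB σ (e : Sym2 V) then Real.exp (-2 * β) else 1) := by
  rw [pottsWeight, Finset.mul_sum, Real.exp_sum]
  refine Finset.prod_congr rfl fun e _ => ?_
  by_cases h : disagreeB σ (e : Sym2 V) <;> simp [h]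

lemma pottsWeight_expand (G : SimpleGraph V) [Fintype G.edgeSet] (β : ℝ) {k : ℕ}
    (σ : V → Fin k) :
    pottsWeight G β σ = ∑ t ∈ (univ : Finset G.edgeSet).powerset,
      (if ∀ e ∈ t, disagreeB σ (e : Sym2 V) = false
        then (1 - Real.exp (-2 * β)) ^ t.card else 0) *
        Real.exp (-2 * β) ^ ((univ : Finset G.edgeSet) \ t).card := by
  classical
  rw [pottsWeight_eq_prod]
  have h1 : ∀ e : G.edgeSet, (if disagreeB σ (e : Sym2 V) then Real.exp (-2 * β) else 1)
      = (if disagreeB σ (e : Sym2 V) = false then (1 - Real.exp (-2 * β)) else 0)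
        + Real.exp (-2 * β) := by
    intro e; by_cases h : disagreeB σ (e : Sym2 V) <;> simp [h]
  rw [Finset.prod_congr rfl (fun e _ => h1 e), Finset.prod_add]
  refine Finset.sum_congr rfl fun t ht => ?_
  rw [Finset.prod_const]
  congr 1
  by_cases h : ∀ e ∈ t, disagreeB σ (e : Sym2 V) = false
  · rw [if_pos h, Finset.prod_congr rfl (fun e he => if_pos (h e he)), Finset.prod_const]
  · rw [if_neg h]
    push_neg at h
    obtain ⟨e, het, hne⟩ := h
    exact Finset.prod_eq_zero het (if_neg hne)

lemma Z_pair_le (G : SimpleGraph V) [Fintype G.edgeSet] {β : ℝ} (hβ : 0 ≤ β)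
    {q : ℕ} (i j : Fin q) (x y : V) :
    (∑ σ ∈ univ.filter (fun σ : V → Fin q => σ x = i ∧ σ y = j), pottsWeight G β σ) ≤
    (∑ σ ∈ univ.filter (fun σ : V → Fin q => σ x = i ∧ σ y = i), pottsWeight G β σ) := by
  classical
  have hr0 : (0:ℝ) ≤ Real.exp (-2 * β) := (Real.exp_pos _).le
  have hr1 : Real.exp (-2 * β) ≤ 1 := by
    rw [Real.exp_le_one_iff]; nlinarith
  simp only [pottsWeight_expand G β]
  rw [Finset.sum_comm, Finset.sum_comm
    (s := univ.filter (fun σ : V → Fin q => σ x = i ∧ σ y = i))]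
  refine Finset.sum_le_sum fun t ht => ?_
  have key : ∀ (c : Fin q),
      (∑ σ ∈ univ.filter (fun σ : V → Fin q => σ x = i ∧ σ y = c),
        (if ∀ e ∈ t, disagreeB σ (e : Sym2 V) = false
          then (1 - Real.exp (-2 * β)) ^ t.card else 0) *
          Real.exp (-2 * β) ^ ((univ : Finset G.edgeSet) \ t).card)
      = ((univ.filter (fun σ : V → Fin q => (σ x = i ∧ σ y = c) ∧
          ∀ e ∈ t, disagreeB σ (e : Sym2 V) = false)).card : ℝ) *
        ((1 - Real.exp (-2 * β)) ^ t.card *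
          Real.exp (-2 * β) ^ ((univ : Finset G.edgeSet) \ t).card) := by
    intro c
    have e1 : ∀ σ : V → Fin q,
        (if ∀ e ∈ t, disagreeB σ (e : Sym2 V) = false
          then (1 - Real.exp (-2 * β)) ^ t.card else 0) *
          Real.exp (-2 * β) ^ ((univ : Finset G.edgeSet) \ t).card
        = (if ∀ e ∈ t, disagreeB σ (e : Sym2 V) = false
          then (1 - Real.exp (-2 * β)) ^ t.card *
            Real.exp (-2 * β) ^ ((univ : Finset G.edgeSet) \ t).card else 0) := by
      intro σ
      by_cases h : ∀ e ∈ t, disagreeB σ (e : Sym2 V) = false <;> simp [h]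
    rw [Finset.sum_congr rfl fun σ _ => e1 σ, ← Finset.sum_filter, Finset.sum_const,
      nsmul_eq_mul, Finset.filter_filter]
  rw [key j, key i]
  refine mul_le_mul_of_nonneg_right ?_
    (mul_nonneg (pow_nonneg (by linarith) _) (pow_nonneg hr0 _))
  exact_mod_cast card_pair_le G i j x y t

end Auxiliary

section Main

variable {V : Type*} [Fintype V] [DecidableEq V]

set_option linter.unusedSectionVars false

lemma Z_marg_eq (G : SimpleGraph V) [Fintype G.edgeSet] (β : ℝ) {q : ℕ} (i j : Fin q)
    (x : V) :
    ∑ σ ∈ univ.filter (fun σ : V → Fin q => σ x = i), pottsWeight G β σ =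
    ∑ σ ∈ univ.filter (fun σ : V → Fin q => σ x = j), pottsWeight G β σ := by
  classical
  have hw : ∀ σ : V → Fin q, pottsWeight G β ((Equiv.swap i j) ∘ σ) = pottsWeight G β σ := by
    intro σ
    unfold pottsWeight
    simp only [disagreeB_comp]
  refine Finset.sum_nbij' (fun σ => (Equiv.swap i j) ∘ σ) (fun σ => (Equiv.swap i j) ∘ σ)
    ?_ ?_ ?_ ?_ ?_
  · intro σ hσ
    simp only [mem_filter, mem_univ, true_and] at hσ ⊢
    simp [Function.comp, hσ, Equiv.swap_apply_left]
  · intro σ hσ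
    simp only [mem_filter, mem_univ, true_and] at hσ ⊢
    simp [Function.comp, hσ, Equiv.swap_apply_right]
  · intro σ _; funext v; simp [Function.comp, Equiv.swap_apply_self]
  · intro σ _; funext v; simp [Function.comp, Equiv.swap_apply_self]
  · intro σ _; exact (hw σ).symm

lemma Z_total_eq (G : SimpleGraph V) [Fintype G.edgeSet] (β : ℝ) {q : ℕ} (i : Fin q)
    (x : V) :
    (∑ σ' : V → Fin q, pottsWeight G β σ') =
      q * ∑ σ ∈ univ.filter (fun σ : V → Fin q => σ x = i), pottsWeight G β σ := by
  classical
  rw [← Finset.sum_fiberwise univ (fun σ : V → Fin q => σ x) (pottsWeight G β),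
    Finset.sum_congr rfl (fun j _ => Z_marg_eq G β j i x), Finset.sum_const, card_univ,
    Fintype.card_fin, nsmul_eq_mul]

lemma Z_total_pos (G : SimpleGraph V) [Fintype G.edgeSet] (β : ℝ) {q : ℕ} (hq : 0 < q) :
    0 < ∑ σ' : V → Fin q, pottsWeight G β σ' :=
  Finset.sum_pos (fun _ _ => Real.exp_pos _) ⟨fun _ => ⟨0, hq⟩, mem_univ _⟩

lemma potts_marginal (G : SimpleGraph V) [Fintype G.edgeSet] (β : ℝ) {q : ℕ}
    (hq : 0 < q) (i : Fin q) (x : V) :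
    ∑ σ ∈ univ.filter (fun σ : V → Fin q => σ x = i), pottsMeasure G β σ = 1 / q := by
  classical
  have hZ : 0 < ∑ σ' : V → Fin q, pottsWeight G β σ' := Z_total_pos G β hq
  have hqR : (0:ℝ) < q := by exact_mod_cast hq
  have htot := Z_total_eq G β i x
  have hSx : 0 < ∑ σ ∈ univ.filter (fun σ : V → Fin q => σ x = i), pottsWeight G β σ := by
    by_contra h
    push_neg at h
    nlinarith
  calc ∑ σ ∈ univ.filter (fun σ : V → Fin q => σ x = i), pottsMeasure G β σ
      = (∑ σ ∈ univ.filter (fun σ : V → Fin q => σ x = i), pottsWeight G β σ) /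
          (∑ σ' : V → Fin q, pottsWeight G β σ') := by
        rw [Finset.sum_div]; rfl
    _ = 1 / q := by
        rw [htot]
        rw [mul_comm, div_mul_eq_div_div, div_self hSx.ne']

end Main

/-- In the Potts model, single-site marginals equal `q`, and
the events `{X(x)=i}` and `{X(y)=i}` are positively correlated. -/
theorem potts_positive_correlation (G : SimpleGraph V) [Fintype G.edgeSet]
    (β : ℝ) (hβ : 0 ≤ β) (q : ℕ) (hq : 2 ≤ q) (i : Fin q) (x y : V) :
    (∑ σ ∈ univ.filter (fun σ : V → Fin q => σ x = i), pottsMeasure G β σ) = 1 / q ∧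
    (∑ σ ∈ univ.filter (fun σ : V → Fin q => σ y = i), pottsMeasure G β σ) = 1 / q ∧
    (∑ σ ∈ univ.filter (fun σ : V → Fin q => σ x = i ∧ σ y = i), pottsMeasure G β σ) ≥
      (∑ σ ∈ univ.filter (fun σ : V → Fin q => σ x = i), pottsMeasure G β σ) *
        (∑ σ ∈ univ.filter (fun σ : V → Fin q => σ y = i), pottsMeasure G β σ) := by
  classical
  have hq0 : 0 < q := lt_of_lt_of_le two_pos hq
  have hqR : (0:ℝ) < q := by exact_mod_cast hq0
  have hZ : 0 < ∑ σ' : V → Fin q, pottsWeight G β σ' := Z_total_pos G β hq0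
  refine ⟨potts_marginal G β hq0 i x, potts_marginal G β hq0 i y, ?_⟩
  rw [potts_marginal G β hq0 i x, potts_marginal G β hq0 i y]
  -- rewrite the sum of measures as a ratio of sums of weights
  have hsum : ∑ σ ∈ univ.filter (fun σ : V → Fin q => σ x = i ∧ σ y = i),
      pottsMeasure G β σ =
      (∑ σ ∈ univ.filter (fun σ : V → Fin q => σ x = i ∧ σ y = i), pottsWeight G β σ) /
        (∑ σ' : V → Fin q, pottsWeight G β σ') := by
    rw [Finset.sum_div]; rfl
  rw [hsum, ge_iff_le, le_div_iff₀ hZ]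
  set Sii := ∑ σ ∈ univ.filter (fun σ : V → Fin q => σ x = i ∧ σ y = i),
    pottsWeight G β σ with hSii
  set Sx := ∑ σ ∈ univ.filter (fun σ : V → Fin q => σ x = i), pottsWeight G β σ with hSx
  have hZeq : (∑ σ' : V → Fin q, pottsWeight G β σ') = q * Sx := Z_total_eq G β i x
  have hfib : ∑ j : Fin q, ∑ σ ∈ (univ.filter (fun σ : V → Fin q => σ x = i)).filter
      (fun σ => σ y = j), pottsWeight G β σ = Sx :=
    Finset.sum_fiberwise _ _ _
  simp only [Finset.filter_filter] at hfib
  have hle : Sx ≤ q * Sii := by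
    calc Sx = ∑ j : Fin q, ∑ σ ∈ univ.filter
          (fun σ : V → Fin q => σ x = i ∧ σ y = j), pottsWeight G β σ := hfib.symm
      _ ≤ ∑ _j : Fin q, Sii := Finset.sum_le_sum fun j _ => Z_pair_le G hβ i j x y
      _ = q * Sii := by rw [Finset.sum_const, card_univ, Fintype.card_fin, nsmul_eq_mul]
  rw [hZeq]
  have hexp : 1 / (q:ℝ) * (1 / q) * (q * Sx) = (1 / q) * Sx := by
    field_simp
  rw [hexp]
  have hstep : (1 / (q:ℝ)) * Sx ≤ (1 / q) * (q * Sii) :=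
    mul_le_mul_of_nonneg_left hle (by positivity)
  have hq1 : (1 / (q:ℝ)) * (q * Sii) = Sii := by
    field_simp
  linarith
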